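/- Let V be a real vector space and n ≥ 1 a natural number. If ω₁ and ω₂ are linearly independent alternating n-linear forms on V, then there exist vectors v₁, …, v_{n−1} ∈ V and u₁, u₂ ∈ V such that ω_i(u_j, v₁, …, v_{n−1}) = δ_{ij} for all i, j ∈ {1, 2}, where δ_{ij} is the Kronecker delta. -/

import Mathlib

open Fin

section aux
variable {V : Type*} [AddCommGroup V] [Module ℝ V]

lemma swap01 {k : ℕ} (f : V [⋀^Fin (k + 2)]→ₗ[ℝ] ℝ) (x t : V) (C : Fin k → V) :
    f (Fin.cons x (Fin.cons t C)) = - f (Fin.cons t (Fin.cons x C)) := by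
  have h := (f.map_swap (Fin.cons t (Fin.cons x C))
    (show (0 : Fin (k+2)) ≠ (1 : Fin (k+2)) by simp [Fin.ext_iff]))
  rw [← h]
  congr 1
  funext i
  refine Fin.cases ?_ (fun i => ?_) i
  · simp [Equiv.swap_apply_left]
  · refine Fin.cases ?_ (fun j => ?_) i
    · simp [Fin.succ_zero_eq_one, Equiv.swap_apply_right]
    · have h0 : (j.succ.succ : Fin (k+2)) ≠ 0 := Fin.succ_ne_zero _
      have h1 : (j.succ.succ : Fin (k+2)) ≠ 1 := by
        simp [Fin.ext_iff]
      simp [Equiv.swap_apply_of_ne_of_ne h0 h1]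

end aux

section aux2
variable {V : Type*} [AddCommGroup V] [Module ℝ V]

lemma cons_add' {k : ℕ} (f : V [⋀^Fin (k + 1)]→ₗ[ℝ] ℝ) (m : Fin k → V) (x y : V) :
    f (Fin.cons (x + y) m) = f (Fin.cons x m) + f (Fin.cons y m) :=
  f.map_vecCons_add m x y

lemma cons_smul' {k : ℕ} (f : V [⋀^Fin (k + 1)]→ₗ[ℝ] ℝ) (m : Fin k → V) (c : ℝ) (x : V) :
    f (Fin.cons (c • x) m) = c * f (Fin.cons x m) :=
  f.map_vecCons_smul m c x

lemma arith_contra (p q r s u0 u1 w0 w1 : ℝ)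
    (E1 : u0 * s = r * u1) (E2 : u0 * q = p * u1)
    (E3 : w0 * q = p * w1) (E4 : w0 * s = r * w1)
    (P1 : (p + u0) * (w1 + s) = (w0 + r) * (q + u1))
    (hne : p * s ≠ r * q) : False := by
  have hD : p * s - r * q ≠ 0 := sub_ne_zero_of_ne hne
  have hu0 : u0 = 0 := by
    have h : u0 * (p * s - r * q) = 0 := by linear_combination p * E1 - r * E2
    exact (mul_eq_zero.mp h).resolve_right hD
  have hu1 : u1 = 0 := by
    have h : u1 * (p * s - r * q) = 0 := by linear_combination q * E1 - s * E2
    exact (mul_eq_zero.mp h).resolve_right hD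
  have hw0 : w0 = 0 := by
    have h : w0 * (p * s - r * q) = 0 := by linear_combination p * E4 - r * E3
    exact (mul_eq_zero.mp h).resolve_right hD
  have hw1 : w1 = 0 := by
    have h : w1 * (p * s - r * q) = 0 := by linear_combination q * E4 - s * E3
    exact (mul_eq_zero.mp h).resolve_right hD
  apply hne
  rw [hu0, hu1, hw0, hw1] at P1
  linear_combination P1

lemma cross_ne (n : ℕ) (ω0 ω1 : V [⋀^Fin (n + 1)]→ₗ[ℝ] ℝ)
    (hMN : ∃ M N, ω0 M * ω1 N ≠ ω0 N * ω1 M) :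
    ∃ (v : Fin n → V) (x y : V),
      ω0 (Fin.cons x v) * ω1 (Fin.cons y v) ≠ ω0 (Fin.cons y v) * ω1 (Fin.cons x v) := by
  induction n with
  | zero =>
    obtain ⟨M, N, hMN⟩ := hMN
    refine ⟨fun i => i.elim0, M 0, N 0, ?_⟩
    have hM : Fin.cons (M 0) (fun i : Fin 0 => i.elim0) = M := by
      funext i
      refine Fin.cases rfl (fun j => j.elim0) i
    have hN : Fin.cons (N 0) (fun i : Fin 0 => i.elim0) = N := by
      funext i
      refine Fin.cases rfl (fun j => j.elim0) i
    rw [hM, hN]; exact hMN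
  | succ k ih =>
    by_cases hex : ∃ (t : V) (P Q : Fin (k+1) → V),
        ω0 (Fin.cons t P) * ω1 (Fin.cons t Q) ≠ ω0 (Fin.cons t Q) * ω1 (Fin.cons t P)
    · obtain ⟨t, P, Q, hPQ⟩ := hex
      obtain ⟨v', x, y, hxy⟩ := ih (ω0.curryLeft t) (ω1.curryLeft t) ⟨P, Q, by
        simpa [AlternatingMap.curryLeft_apply_apply, Matrix.vecCons] using hPQ⟩
      refine ⟨Fin.cons t v', x, y, ?_⟩
      rw [swap01 ω0 x t v', swap01 ω1 y t v', swap01 ω0 y t v', swap01 ω1 x t v']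
      simp only [AlternatingMap.curryLeft_apply_apply, Matrix.vecCons] at hxy
      simpa [neg_mul_neg] using hxy
    · exfalso
      push_neg at hex
      obtain ⟨M, N, hd⟩ := hMN
      -- shared slot 1 version
      have H1 : ∀ (x y sv : V) (C D : Fin k → V),
          ω0 (Fin.cons x (Fin.cons sv C)) * ω1 (Fin.cons y (Fin.cons sv D)) =
          ω0 (Fin.cons y (Fin.cons sv D)) * ω1 (Fin.cons x (Fin.cons sv C)) := by
        intro x y sv C D
        rw [swap01 ω0 x sv C, swap01 ω1 y sv D, swap01 ω0 y sv D, swap01 ω1 x sv C]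
        simp only [neg_mul_neg]
        exact hex sv (Fin.cons x C) (Fin.cons y D)
      set a := M 0 with ha
      set A' := Fin.tail M with hA'
      set b := N 0 with hb
      set B' := Fin.tail N with hB'
      have hMc : M = Fin.cons a A' := (Fin.cons_self_tail M).symm
      have hNc : N = Fin.cons b B' := (Fin.cons_self_tail N).symm
      have hA'c : A' = Fin.cons (A' 0) (Fin.tail A') := (Fin.cons_self_tail A').symm
      have hB'c : B' = Fin.cons (B' 0) (Fin.tail B') := (Fin.cons_self_tail B').symm
      rw [hMc, hNc] at hd
      have E1 : ω0 (Fin.cons b A') * ω1 (Fin.cons b B') =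
          ω0 (Fin.cons b B') * ω1 (Fin.cons b A') := hex b A' B'
      have E2 : ω0 (Fin.cons b A') * ω1 (Fin.cons a A') =
          ω0 (Fin.cons a A') * ω1 (Fin.cons b A') := by
        rw [hA'c]; exact H1 b a (A' 0) (Fin.tail A') (Fin.tail A')
      have E3 : ω0 (Fin.cons a B') * ω1 (Fin.cons a A') =
          ω0 (Fin.cons a A') * ω1 (Fin.cons a B') := hex a B' A'
      have E4 : ω0 (Fin.cons a B') * ω1 (Fin.cons b B') =
          ω0 (Fin.cons b B') * ω1 (Fin.cons a B') := by
        rw [hB'c]; exact H1 a b (B' 0) (Fin.tail B') (Fin.tail B')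
      have P1 : (ω0 (Fin.cons a A') + ω0 (Fin.cons b A')) *
            (ω1 (Fin.cons a B') + ω1 (Fin.cons b B')) =
          (ω0 (Fin.cons a B') + ω0 (Fin.cons b B')) *
            (ω1 (Fin.cons a A') + ω1 (Fin.cons b A')) := by
        have := hex (a + b) A' B'
        rwa [cons_add' ω0 A' a b, cons_add' ω1 B' a b, cons_add' ω0 B' a b,
          cons_add' ω1 A' a b] at this
      exact arith_contra (ω0 (Fin.cons a A')) (ω1 (Fin.cons a A'))
        (ω0 (Fin.cons b B')) (ω1 (Fin.cons b B'))
        (ω0 (Fin.cons b A')) (ω1 (Fin.cons b A'))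
        (ω0 (Fin.cons a B')) (ω1 (Fin.cons a B'))
        E1 E2 E3 E4 P1 hd

end aux2



/-- Let `V` be a real vector space and `n + 1 ≥ 1`. If `ω 0` and `ω 1` are
linearly independent alternating `(n+1)`-linear forms on `V`, then there exist vectors
`v 0, …, v (n-1) ∈ V` and `u 0, u 1 ∈ V` such that `ω i (u j, v 0, …, v (n-1)) = δᵢⱼ`. -/
theorem stmt1 (V : Type*) [AddCommGroup V] [Module ℝ V] (n : ℕ)
    (ω : Fin 2 → (V [⋀^Fin (n + 1)]→ₗ[ℝ] ℝ))
    (h : LinearIndependent ℝ ω) :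
    ∃ (v : Fin n → V) (u : Fin 2 → V),
      ∀ i j : Fin 2, ω i (Fin.cons (u j) v) = if i = j then 1 else 0 := by
  have hMN : ∃ M N, ω 0 M * ω 1 N ≠ ω 0 N * ω 1 M := by
    by_contra hc
    push_neg at hc
    rcases eq_or_ne (ω 0) 0 with h0 | h0
    · exact h.ne_zero 0 h0
    · obtain ⟨A, hA⟩ : ∃ A, ω 0 A ≠ 0 := by
        by_contra hA
        push_neg at hA
        exact h0 (AlternatingMap.ext hA)
      have hsum : ∑ i : Fin 2, (![ω 1 A, -(ω 0 A)] i) • ω i = 0 := by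
        rw [Fin.sum_univ_two]
        ext M
        simp only [Matrix.cons_val_zero, Matrix.cons_val_one, Matrix.head_cons,
          AlternatingMap.add_apply, AlternatingMap.smul_apply, AlternatingMap.zero_apply,
          smul_eq_mul]
        linear_combination - hc A M
      have := Fintype.linearIndependent_iff.mp h (![ω 1 A, -(ω 0 A)]) hsum 1
      simp at this
      exact hA this
  obtain ⟨v, x, y, hv⟩ := cross_ne n (ω 0) (ω 1) hMN
  set a0 := ω 0 (Fin.cons x v) with ha0
  set a1 := ω 1 (Fin.cons x v) with ha1
  set b0 := ω 0 (Fin.cons y v) with hb0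
  set b1 := ω 1 (Fin.cons y v) with hb1
  have hD : a0 * b1 - b0 * a1 ≠ 0 := sub_ne_zero_of_ne hv
  have hD' : b1 * a0 - b0 * a1 ≠ 0 := by rw [mul_comm b1 a0]; exact hD
  refine ⟨v, ![(b1 / (a0 * b1 - b0 * a1)) • x + (-(a1 / (a0 * b1 - b0 * a1))) • y,
      (-(b0 / (a0 * b1 - b0 * a1))) • x + (a0 / (a0 * b1 - b0 * a1)) • y], ?_⟩
  have key : ∀ (ι : Fin 2) (c d : ℝ),
      ω ι (Fin.cons (c • x + d • y) v) = c * ω ι (Fin.cons x v) + d * ω ι (Fin.cons y v) := by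
    intro ι c d
    rw [cons_add' (ω ι), cons_smul' (ω ι), cons_smul' (ω ι)]
  intro i j
  fin_cases i <;> fin_cases j <;>
    simp only [Fin.mk_zero, Fin.mk_one, Matrix.cons_val_zero, Matrix.cons_val_one,
      Matrix.head_cons, key, ← ha0, ← ha1, ← hb0, ← hb1, Fin.isValue] <;>
    norm_num <;>
    field_simp <;>
    ring
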